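/- For fixed n > 0 and λ ≥ 0 and any 0 < u ≤ u' < 1: Pr[χ'²_n(λ) ≥ Ψ̄_n^{-1}(u)] / u ≥ Pr[χ'²_n(λ) ≥ Ψ̄_n^{-1}(u')] / u'; in particular, for the BH constants α_r = rα_1, Pr[χ'²_n(λ) ≥ Ψ̄_n^{-1}(α_{r+1})] / (r+1) ≤ α_1 · Pr[χ'²_n(λ) ≥ Ψ̄_n^{-1}(α_1)] / α_1 holds for every r ≥ 0. -/

import Mathlib

/-- Chi-squared density with `n > 0` degrees of freedom. -/
noncomputable def chiPDF (n y : ℝ) : ℝ :=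
  if 0 < y then Real.exp (-y / 2) * y ^ (n / 2 - 1) / (2 ^ (n / 2) * Real.Gamma (n / 2)) else 0

/-- Chi-squared survival function `Ψ̄_n`. -/
noncomputable def chiSurv (n x : ℝ) : ℝ := ∫ t in Set.Ioi x, chiPDF n t

/-- Non-central chi-squared density: Poisson(lam/2) mixture of central densities. -/
noncomputable def ncChiPDF (n lam y : ℝ) : ℝ :=
  ∑' j : ℕ, Real.exp (-lam / 2) * (lam / 2) ^ j / (Nat.factorial j) * chiPDF (n + 2 * j) y

/-- Non-central chi-squared survival function. -/
noncomputable def ncChiSurv (n lam x : ℝ) : ℝ := ∫ t in Set.Ioi x, ncChiPDF n lam t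

open MeasureTheory Real Set

section aux

variable {n lam : ℝ}

/-- Poisson weights. -/
noncomputable def pw (lam : ℝ) (j : ℕ) : ℝ :=
  Real.exp (-lam / 2) * (lam / 2) ^ j / (Nat.factorial j)

lemma pw_nonneg (hlam : 0 ≤ lam) (j : ℕ) : 0 ≤ pw lam j := by
  unfold pw; positivity

lemma pw_summable (lam : ℝ) : Summable (pw lam) := by
  unfold pw
  simpa [mul_div_assoc] using (Real.summable_pow_div_factorial (lam / 2)).mul_left (Real.exp (-lam / 2))

/-- Likelihood-ratio coefficients. -/
noncomputable def wj (n lam : ℝ) (j : ℕ) : ℝ :=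
  pw lam j * (Real.Gamma (n / 2) / (2 ^ j * Real.Gamma (n / 2 + j)))

/-- Likelihood ratio `h`. -/
noncomputable def hfun (n lam y : ℝ) : ℝ := ∑' j : ℕ, wj n lam j * (max y 0) ^ j

lemma wj_nonneg (hn : 0 < n) (hlam : 0 ≤ lam) (j : ℕ) : 0 ≤ wj n lam j := by
  have h1 : 0 < Real.Gamma (n / 2) := Real.Gamma_pos_of_pos (by linarith)
  have h2 : 0 < Real.Gamma (n / 2 + j) := Real.Gamma_pos_of_pos (by positivity)
  have := pw_nonneg hlam j
  unfold wj
  positivity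

lemma Gamma_shift_lb (hn : 0 < n) (j : ℕ) :
    min (n / 2) 1 * Real.Gamma (n / 2) ≤ Real.Gamma (n / 2 + j) := by
  induction j with
  | zero =>
      simp only [Nat.cast_zero, add_zero]
      have h1 : 0 < Real.Gamma (n / 2) := Real.Gamma_pos_of_pos (by linarith)
      nlinarith [min_le_right (n / 2) 1]
  | succ k ih =>
      have hpos : (0 : ℝ) < n / 2 + k := by positivity
      have hrec : Real.Gamma (n / 2 + (k + 1 : ℕ)) = (n / 2 + k) * Real.Gamma (n / 2 + k) := by
        rw [show ((k + 1 : ℕ) : ℝ) = (k : ℝ) + 1 by push_cast; ring, ← add_assoc]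
        exact Real.Gamma_add_one hpos.ne'
      rw [hrec]
      rcases Nat.eq_zero_or_pos k with hk | hk
      · subst hk
        simp only [Nat.cast_zero, add_zero]
        have h1 : 0 < Real.Gamma (n / 2) := Real.Gamma_pos_of_pos (by linarith)
        nlinarith [min_le_left (n / 2) 1]
      · have h1 : (1 : ℝ) ≤ n / 2 + k := by
          have : (1 : ℝ) ≤ (k : ℝ) := by exact_mod_cast hk
          linarith
        have h2 : 0 < Real.Gamma (n / 2 + k) := Real.Gamma_pos_of_pos hpos
        nlinarith

lemma wj_term_le (hn : 0 < n) (hlam : 0 ≤ lam) (j : ℕ) {m : ℝ} (hm : 0 ≤ m) :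
    wj n lam j * m ^ j ≤
      (Real.exp (-lam / 2) / min (n / 2) 1) * ((lam * m / 4) ^ j / (Nat.factorial j)) := by
  have hmin : 0 < min (n / 2) 1 := lt_min (by linarith) one_pos
  have hG : 0 < Real.Gamma (n / 2) := Real.Gamma_pos_of_pos (by linarith)
  have hGj : 0 < Real.Gamma (n / 2 + j) := Real.Gamma_pos_of_pos (by positivity)
  have hlb := Gamma_shift_lb hn j
  have hfac : (0 : ℝ) < (Nat.factorial j : ℝ) := by exact_mod_cast j.factorial_pos
  have key : wj n lam j * m ^ j =
      Real.exp (-lam / 2) * ((lam * m / 4) ^ j / (Nat.factorial j)) *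
        (Real.Gamma (n / 2) / Real.Gamma (n / 2 + j)) := by
    unfold wj pw
    have h4 : ((lam * m / 4) ^ j : ℝ) = (lam / 2) ^ j * m ^ j / 2 ^ j := by
      rw [show lam * m / 4 = (lam / 2) * m / 2 by ring, div_pow, mul_pow]
    rw [h4]
    field_simp
  rw [key]
  have hratio : Real.Gamma (n / 2) / Real.Gamma (n / 2 + j) ≤ 1 / min (n / 2) 1 := by
    rw [div_le_div_iff₀ hGj hmin]
    nlinarith
  have hnn : 0 ≤ Real.exp (-lam / 2) * ((lam * m / 4) ^ j / (Nat.factorial j)) := by positivity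
  calc Real.exp (-lam / 2) * ((lam * m / 4) ^ j / (Nat.factorial j)) *
        (Real.Gamma (n / 2) / Real.Gamma (n / 2 + j))
      ≤ Real.exp (-lam / 2) * ((lam * m / 4) ^ j / (Nat.factorial j)) * (1 / min (n / 2) 1) :=
        mul_le_mul_of_nonneg_left hratio hnn
    _ = (Real.exp (-lam / 2) / min (n / 2) 1) * ((lam * m / 4) ^ j / (Nat.factorial j)) := by
        ring

lemma hfun_summable (hn : 0 < n) (hlam : 0 ≤ lam) (y : ℝ) :
    Summable (fun j : ℕ => wj n lam j * (max y 0) ^ j) := by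
  have hm : (0 : ℝ) ≤ max y 0 := le_max_right _ _
  refine Summable.of_nonneg_of_le (fun j => ?_) (fun j => wj_term_le hn hlam j hm) ?_
  · have := wj_nonneg hn hlam j
    positivity
  · exact (Real.summable_pow_div_factorial (lam * max y 0 / 4)).mul_left _

lemma hfun_nonneg (hn : 0 < n) (hlam : 0 ≤ lam) (y : ℝ) : 0 ≤ hfun n lam y :=
  tsum_nonneg fun j => by
    have := wj_nonneg hn hlam j
    have : 0 ≤ (max y 0) ^ j := pow_nonneg (le_max_right _ _) _
    positivity

lemma hfun_mono (hn : 0 < n) (hlam : 0 ≤ lam) : Monotone (hfun n lam) := by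
  intro y y' hyy'
  refine Summable.tsum_le_tsum (fun j => ?_) (hfun_summable hn hlam y) (hfun_summable hn hlam y')
  exact mul_le_mul_of_nonneg_left
    (pow_le_pow_left₀ (le_max_right _ _) (max_le_max hyy' le_rfl) j)
    (wj_nonneg hn hlam j)

lemma chiPDF_nonneg (hn : 0 < n) (y : ℝ) : 0 ≤ chiPDF n y := by
  unfold chiPDF
  split_ifs with h
  · have hG : 0 < Real.Gamma (n / 2) := Real.Gamma_pos_of_pos (by linarith)
    positivity
  · exact le_refl 0

lemma chiPDF_factor (hn : 0 < n) (hlam : 0 ≤ lam) (j : ℕ) (t : ℝ) :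
    pw lam j * chiPDF (n + 2 * j) t = chiPDF n t * (wj n lam j * (max t 0) ^ j) := by
  by_cases ht : 0 < t
  · have hmax : max t 0 = t := max_eq_left ht.le
    have hG : Real.Gamma (n / 2) ≠ 0 := (Real.Gamma_pos_of_pos (by linarith)).ne'
    have hGj : Real.Gamma (n / 2 + j) ≠ 0 := (Real.Gamma_pos_of_pos (by positivity)).ne'
    have e2 : (n + 2 * (j : ℝ)) / 2 = n / 2 + (j : ℝ) := by ring
    have e3 : t ^ (n / 2 + (j : ℝ) - 1) = t ^ (n / 2 - 1) * t ^ j := by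
      rw [show n / 2 + (j : ℝ) - 1 = (n / 2 - 1) + (j : ℝ) by ring, Real.rpow_add ht,
        Real.rpow_natCast]
    have e4 : (2 : ℝ) ^ (n / 2 + (j : ℝ)) = (2 : ℝ) ^ (n / 2) * 2 ^ j := by
      rw [Real.rpow_add two_pos, Real.rpow_natCast]
    have h2 : ((2 : ℝ) ^ (n / 2)) ≠ 0 := (Real.rpow_pos_of_pos two_pos _).ne'
    have h2j : ((2 : ℝ) ^ j) ≠ 0 := by positivity
    simp only [chiPDF, if_pos ht, e2, e3, e4, hmax, wj]
    field_simp
  · simp only [chiPDF, if_neg ht, mul_zero, zero_mul]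

lemma ncChiPDF_eq (hn : 0 < n) (hlam : 0 ≤ lam) (t : ℝ) :
    ncChiPDF n lam t = chiPDF n t * hfun n lam t := by
  unfold ncChiPDF hfun
  rw [show (fun j : ℕ => Real.exp (-lam / 2) * (lam / 2) ^ j / (Nat.factorial j) *
      chiPDF (n + 2 * j) t) = fun j : ℕ => chiPDF n t * (wj n lam j * (max t 0) ^ j) from
    funext fun j => chiPDF_factor hn hlam j t]
  exact tsum_mul_left

lemma ncChiPDF_nonneg (hn : 0 < n) (hlam : 0 ≤ lam) (t : ℝ) : 0 ≤ ncChiPDF n lam t := by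
  rw [ncChiPDF_eq hn hlam]
  exact mul_nonneg (chiPDF_nonneg hn t) (hfun_nonneg hn hlam t)

lemma chiPDF_measurable (s : ℝ) : Measurable (chiPDF s) := by
  unfold chiPDF
  refine Measurable.ite measurableSet_Ioi ?_ measurable_const
  exact (((measurable_id.neg.div_const 2).exp).mul
    (measurable_id.pow_const _  )).div_const _

lemma chiPDF_integrable (hs : 0 < n) : Integrable (chiPDF n) := by
  have h0 : (0:ℝ) < n / 2 := by linarith
  have hker : IntegrableOn (fun y : ℝ => Real.exp (-y / 2) * y ^ (n / 2 - 1)) (Ioi 0) := by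
    have := integrableOn_rpow_mul_exp_neg_mul_rpow (p := 1) (s := n / 2 - 1) (b := 1 / 2)
      (by linarith) zero_lt_one (by norm_num)
    refine (this.congr_fun (fun x hx => ?_) measurableSet_Ioi)
    beta_reduce
    rw [Real.rpow_one]
    ring_nf
  have : chiPDF n = (Ioi (0:ℝ)).indicator
      (fun y => Real.exp (-y / 2) * y ^ (n / 2 - 1) / (2 ^ (n / 2) * Real.Gamma (n / 2))) := by
    funext y
    simp [chiPDF, Set.indicator_apply, Set.mem_Ioi]
  rw [this, integrable_indicator_iff measurableSet_Ioi]
  exact hker.div_const _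

lemma chiPDF_total (hs : 0 < n) : ∫ y, chiPDF n y = 1 := by
  have h0 : (0:ℝ) < n / 2 := by linarith
  have hval : ∫ y in Ioi (0:ℝ), y ^ (n / 2 - 1) * Real.exp (-(1/2) * y ^ (1:ℝ)) =
      ((1:ℝ)/2) ^ (-(n / 2 - 1 + 1) / 1) * (1 / 1) * Real.Gamma ((n / 2 - 1 + 1) / 1) :=
    integral_rpow_mul_exp_neg_mul_rpow one_pos (by linarith) (by norm_num)
  have hpow : ((1:ℝ)/2) ^ (-(n / 2 - 1 + 1) / 1) = (2:ℝ) ^ (n/2) := by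
    rw [show (-(n / 2 - 1 + 1) / 1 : ℝ) = -(n/2) by ring, one_div,
      Real.inv_rpow (by norm_num), Real.rpow_neg (by norm_num), inv_inv]
  have hind : chiPDF n = (Ioi (0:ℝ)).indicator
      (fun y => Real.exp (-y / 2) * y ^ (n / 2 - 1) / (2 ^ (n / 2) * Real.Gamma (n / 2))) := by
    funext y
    simp [chiPDF, Set.indicator_apply, Set.mem_Ioi]
  rw [hind, MeasureTheory.integral_indicator measurableSet_Ioi]
  have : ∫ y in Ioi (0:ℝ), Real.exp (-y / 2) * y ^ (n / 2 - 1) / (2 ^ (n / 2) * Real.Gamma (n / 2))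
      = (∫ y in Ioi (0:ℝ), y ^ (n / 2 - 1) * Real.exp (-(1/2) * y ^ (1:ℝ))) / (2 ^ (n / 2) * Real.Gamma (n / 2)) := by
    rw [← MeasureTheory.integral_div]
    refine setIntegral_congr_fun measurableSet_Ioi (fun y hy => ?_)
    rw [Real.rpow_one]
    ring_nf
  rw [this, hval, hpow]
  have hG : Real.Gamma (n / 2) ≠ 0 := (Real.Gamma_pos_of_pos h0).ne'
  have h2 : ((2:ℝ) ^ (n / 2)) ≠ 0 := (Real.rpow_pos_of_pos two_pos _).ne'
  rw [show (n / 2 - 1 + 1) / 1 = n / 2 by ring]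
  field_simp

lemma ncChiPDF_measurable (hn : 0 < n) (hlam : 0 ≤ lam) : Measurable (ncChiPDF n lam) := by
  have : ncChiPDF n lam = fun t => chiPDF n t * hfun n lam t :=
    funext (ncChiPDF_eq hn hlam)
  rw [this]
  exact (chiPDF_measurable n).mul (hfun_mono hn hlam).measurable

lemma summable_F (hn : 0 < n) (hlam : 0 ≤ lam) (t : ℝ) :
    Summable (fun j : ℕ => pw lam j * chiPDF (n + 2 * j) t) := by
  rw [show (fun j : ℕ => pw lam j * chiPDF (n + 2 * j) t)
      = fun j : ℕ => chiPDF n t * (wj n lam j * (max t 0) ^ j) from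
    funext fun j => chiPDF_factor hn hlam j t]
  exact (hfun_summable hn hlam t).mul_left _

lemma ncChiPDF_integrable (hn : 0 < n) (hlam : 0 ≤ lam) : Integrable (ncChiPDF n lam) := by
  have hFj : ∀ j : ℕ, Integrable (fun t => pw lam j * chiPDF (n + 2 * j) t) := fun j =>
    (chiPDF_integrable (by positivity)).const_mul _
  have hFjnn : ∀ j : ℕ, ∀ t : ℝ, 0 ≤ pw lam j * chiPDF (n + 2 * j) t := fun j t =>
    mul_nonneg (pw_nonneg hlam j) (chiPDF_nonneg (by positivity) t)
  refine ⟨(ncChiPDF_measurable hn hlam).aestronglyMeasurable, ?_⟩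
  rw [hasFiniteIntegral_iff_ofReal (Filter.Eventually.of_forall (ncChiPDF_nonneg hn hlam))]
  have heq : ∀ t : ℝ, ENNReal.ofReal (ncChiPDF n lam t)
      = ∑' j : ℕ, ENNReal.ofReal (pw lam j * chiPDF (n + 2 * j) t) := fun t => by
    rw [show ncChiPDF n lam t = ∑' j : ℕ, pw lam j * chiPDF (n + 2 * j) t from rfl,
      ENNReal.ofReal_tsum_of_nonneg (hFjnn · t) (summable_F hn hlam t)]
  calc ∫⁻ t, ENNReal.ofReal (ncChiPDF n lam t)
      = ∫⁻ t, ∑' j : ℕ, ENNReal.ofReal (pw lam j * chiPDF (n + 2 * j) t) := by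
        simp_rw [heq]
    _ = ∑' j : ℕ, ∫⁻ t, ENNReal.ofReal (pw lam j * chiPDF (n + 2 * j) t) :=
        lintegral_tsum fun j => (((chiPDF_measurable _).const_mul _).ennreal_ofReal).aemeasurable
    _ = ∑' j : ℕ, ENNReal.ofReal (∫ t, pw lam j * chiPDF (n + 2 * j) t) := by
        refine tsum_congr fun j => ?_
        rw [MeasureTheory.ofReal_integral_eq_lintegral_ofReal (hFj j)
          (Filter.Eventually.of_forall (hFjnn j))]
    _ = ∑' j : ℕ, ENNReal.ofReal (pw lam j) := by
        refine tsum_congr fun j => ?_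
        rw [MeasureTheory.integral_const_mul, chiPDF_total (by positivity : (0:ℝ) < n + 2 * j),
          mul_one]
    _ = ENNReal.ofReal (∑' j : ℕ, pw lam j) :=
        (ENNReal.ofReal_tsum_of_nonneg (pw_nonneg hlam) (pw_summable lam)).symm
    _ < ⊤ := ENNReal.ofReal_lt_top

end aux

section key

variable {n lam : ℝ}

lemma chiSurv_nonneg (hn : 0 < n) (x : ℝ) : 0 ≤ chiSurv n x :=
  setIntegral_nonneg measurableSet_Ioi fun t _ => chiPDF_nonneg hn t

lemma key_ineq (hn : 0 < n) (hlam : 0 ≤ lam) {x' x : ℝ} (hxx : x' ≤ x) :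
    chiSurv n x * ncChiSurv n lam x' ≤ chiSurv n x' * ncChiSurv n lam x := by
  set g := chiPDF n with hg
  set f := ncChiPDF n lam with hf
  have hgInt : Integrable g := chiPDF_integrable hn
  have hfInt : Integrable f := ncChiPDF_integrable hn hlam
  have hdisj : Disjoint (Ioc x' x) (Ioi x) :=
    Set.disjoint_left.mpr fun t ht ht' => absurd ht.2 (not_le.mpr ht')
  have hunion : Ioc x' x ∪ Ioi x = Ioi x' := Set.Ioc_union_Ioi_eq_Ioi hxx
  have hsplitG : chiSurv n x' = (∫ t in Ioc x' x, g t) + chiSurv n x := by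
    rw [show chiSurv n x' = ∫ t in Ioi x', g t from rfl, ← hunion,
      setIntegral_union hdisj measurableSet_Ioi hgInt.integrableOn hgInt.integrableOn]
    rfl
  have hsplitF : ncChiSurv n lam x' = (∫ t in Ioc x' x, f t) + ncChiSurv n lam x := by
    rw [show ncChiSurv n lam x' = ∫ t in Ioi x', f t from rfl, ← hunion,
      setIntegral_union hdisj measurableSet_Ioi hfInt.integrableOn hfInt.integrableOn]
    rfl
  set Gm := ∫ t in Ioc x' x, g t with hGm
  set GA := chiSurv n x with hGA
  set Fm := ∫ t in Ioc x' x, f t with hFm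
  set FA := ncChiSurv n lam x with hFA
  set c := hfun n lam x with hc
  have hcnn : 0 ≤ c := hfun_nonneg hn hlam x
  have hGmnn : 0 ≤ Gm := setIntegral_nonneg measurableSet_Ioc fun t _ => chiPDF_nonneg hn t
  have hGAnn : 0 ≤ GA := chiSurv_nonneg hn x
  have hFmnn : 0 ≤ Fm := setIntegral_nonneg measurableSet_Ioc fun t _ => ncChiPDF_nonneg hn hlam t
  have hFA_lb : c * GA ≤ FA := by
    rw [hFA, hGA, show ncChiSurv n lam x = ∫ t in Ioi x, f t from rfl,
      show chiSurv n x = ∫ t in Ioi x, g t from rfl, ← MeasureTheory.integral_const_mul]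
    refine setIntegral_mono_on ((hgInt.const_mul c).integrableOn) hfInt.integrableOn
      measurableSet_Ioi fun t ht => ?_
    rw [hf, ncChiPDF_eq hn hlam t, hg]
    calc c * chiPDF n t ≤ hfun n lam t * chiPDF n t :=
          mul_le_mul_of_nonneg_right (hfun_mono hn hlam (le_of_lt ht)) (chiPDF_nonneg hn t)
      _ = chiPDF n t * hfun n lam t := mul_comm _ _
  have hFm_ub : Fm ≤ c * Gm := by
    rw [hFm, hGm, ← MeasureTheory.integral_const_mul]
    refine setIntegral_mono_on hfInt.integrableOn ((hgInt.const_mul c).integrableOn)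
      measurableSet_Ioc fun t ht => ?_
    rw [hf, ncChiPDF_eq hn hlam t, hg]
    calc chiPDF n t * hfun n lam t = hfun n lam t * chiPDF n t := mul_comm _ _
      _ ≤ c * chiPDF n t :=
          mul_le_mul_of_nonneg_right (hfun_mono hn hlam ht.2) (chiPDF_nonneg hn t)
  rw [hsplitG, hsplitF]
  nlinarith [mul_le_mul_of_nonneg_left hFA_lb hGmnn, mul_le_mul_of_nonneg_right hFm_ub hGAnn]

lemma ncChiSurv_anti (hn : 0 < n) (hlam : 0 ≤ lam) {x x' : ℝ} (h : x ≤ x') :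
    ncChiSurv n lam x' ≤ ncChiSurv n lam x := by
  refine setIntegral_mono_set (ncChiPDF_integrable hn hlam).integrableOn
    (Filter.Eventually.of_forall fun t => ncChiPDF_nonneg hn hlam t) ?_
  exact HasSubset.Subset.eventuallyLE (Set.Ioi_subset_Ioi h)

lemma chiSurv_anti (hn : 0 < n) {x x' : ℝ} (h : x ≤ x') : chiSurv n x' ≤ chiSurv n x := by
  refine setIntegral_mono_set (chiPDF_integrable hn).integrableOn
    (Filter.Eventually.of_forall fun t => chiPDF_nonneg hn t) ?_
  exact HasSubset.Subset.eventuallyLE (Set.Ioi_subset_Ioi h)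

end key


/-- For `n > 0`, `λ ≥ 0` and `0 < u ≤ u' < 1`,
`Pr[χ'²_n(λ) ≥ Ψ̄_n⁻¹(u)]/u ≥ Pr[χ'²_n(λ) ≥ Ψ̄_n⁻¹(u')]/u'`; in particular, for the BH
constants `α_r = r·α₁`, `Pr[χ'²_n(λ) ≥ Ψ̄_n⁻¹(α_{r+1})]/(r+1) ≤ Pr[χ'²_n(λ) ≥ Ψ̄_n⁻¹(α₁)]`
for all `r ≥ 0`. Here `q` denotes the inverse of `Ψ̄_n` on `(0,1)`. -/
theorem ncChiSurv_div_key_inequality (n lam : ℝ) (hn : 0 < n) (hlam : 0 ≤ lam)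
    (q : ℝ → ℝ) (hq : ∀ u ∈ Set.Ioo (0 : ℝ) 1, chiSurv n (q u) = u) :
    (∀ u u' : ℝ, 0 < u → u ≤ u' → u' < 1 →
      ncChiSurv n lam (q u') / u' ≤ ncChiSurv n lam (q u) / u) ∧
    (∀ (α₁ : ℝ) (r : ℕ), 0 < α₁ → ((r : ℝ) + 1) * α₁ < 1 →
      ncChiSurv n lam (q (((r : ℝ) + 1) * α₁)) / ((r : ℝ) + 1) ≤
        α₁ * (ncChiSurv n lam (q α₁) / α₁)) := by
  have main : ∀ u u' : ℝ, 0 < u → u ≤ u' → u' < 1 →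
      ncChiSurv n lam (q u') / u' ≤ ncChiSurv n lam (q u) / u := by
    intro u u' hu huu' hu'
    have hu1 : u < 1 := lt_of_le_of_lt huu' hu'
    have hu'0 : 0 < u' := lt_of_lt_of_le hu huu'
    have hqu : chiSurv n (q u) = u := hq u ⟨hu, hu1⟩
    have hqu' : chiSurv n (q u') = u' := hq u' ⟨hu'0, hu'⟩
    rcases le_or_gt (q u') (q u) with hcase | hcase
    · rw [div_le_div_iff₀ hu'0 hu]
      have := key_ineq hn hlam hcase (lam := lam)
      rw [hqu, hqu'] at this
      linarith
    · have hle : u' ≤ u := by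
        rw [← hqu, ← hqu']
        exact chiSurv_anti hn hcase.le
      have huu : u = u' := le_antisymm huu' hle
      subst huu
      exact le_rfl
  refine ⟨main, fun α₁ r hα hr1 => ?_⟩
  have hr : (0:ℝ) < (r:ℝ) + 1 := by positivity
  have h1 : α₁ ≤ ((r:ℝ) + 1) * α₁ := by nlinarith
  have h := main α₁ (((r:ℝ) + 1) * α₁) hα h1 hr1
  have hS : α₁ * (ncChiSurv n lam (q α₁) / α₁) = ncChiSurv n lam (q α₁) := by
    field_simp
  rw [hS]
  have := mul_le_mul_of_nonneg_right h hα.le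
  calc ncChiSurv n lam (q (((r:ℝ) + 1) * α₁)) / ((r:ℝ) + 1)
      = ncChiSurv n lam (q (((r:ℝ) + 1) * α₁)) / (((r:ℝ) + 1) * α₁) * α₁ := by
        field_simp
    _ ≤ ncChiSurv n lam (q α₁) / α₁ * α₁ := this
    _ = ncChiSurv n lam (q α₁) := by field_simp
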